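/- The relation > on parallel circuits defined via the interpretations is compatible with vertical composition: if f > g (where f, g : m → n) then for any circuits h : p → m and k : n → q, h ⋆₁ f ⋆₁ k > h ⋆₁ g ⋆₁ k. -/
import Mathlib


/-- Circuits over a 2-polygraph with one 0-cell and one 1-cell:
generators `gen m n` are 2-cells with `m` inputs and `n` outputs;
circuits are built by horizontal (`hcomp`, ⋆₀) and vertical (`vcomp`, ⋆₁) composition. -/
inductive Circuit (gen : ℕ → ℕ → Type) : ℕ → ℕ → Type
  | id (n : ℕ) : Circuit gen n n
  | ofGen {m n : ℕ} : gen m n → Circuit gen m n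
  | hcomp {m n p q : ℕ} : Circuit gen m n → Circuit gen p q → Circuit gen (m + p) (n + q)
  | vcomp {m n p : ℕ} : Circuit gen m n → Circuit gen n p → Circuit gen m p

/-- Interpretations of the generators: descending courants, ascending courants, heat. -/
structure Interp (gen : ℕ → ℕ → Type) (X Y M : Type) where
  down : ∀ {m n : ℕ}, gen m n → (Fin m → X) → (Fin n → X)
  up : ∀ {m n : ℕ}, gen m n → (Fin n → Y) → (Fin m → Y)
  heat : ∀ {m n : ℕ}, gen m n → (Fin m → X) → (Fin n → Y) → M

variable {gen : ℕ → ℕ → Type} {X Y M : Type}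

/-- Extension of the descending-courant interpretation to circuits. -/
def Circuit.down (I : Interp gen X Y M) : ∀ {m n : ℕ}, Circuit gen m n → (Fin m → X) → (Fin n → X)
  | _, _, .id _, x => x
  | _, _, .ofGen φ, x => I.down φ x
  | _, _, .hcomp f g, x =>
      Fin.append (f.down I (x ∘ Fin.castAdd _)) (g.down I (x ∘ Fin.natAdd _))
  | _, _, .vcomp f g, x => g.down I (f.down I x)

/-- Extension of the ascending-courant interpretation to circuits. -/
def Circuit.up (I : Interp gen X Y M) : ∀ {m n : ℕ}, Circuit gen m n → (Fin n → Y) → (Fin m → Y)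
  | _, _, .id _, y => y
  | _, _, .ofGen φ, y => I.up φ y
  | _, _, .hcomp f g, y =>
      Fin.append (f.up I (y ∘ Fin.castAdd _)) (g.up I (y ∘ Fin.natAdd _))
  | _, _, .vcomp f g, y => f.up I (g.up I y)

/-- Extension of the heat interpretation to circuits. -/
def Circuit.heat [Zero M] [Add M] (I : Interp gen X Y M) :
    ∀ {m n : ℕ}, Circuit gen m n → (Fin m → X) → (Fin n → Y) → M
  | _, _, .id _, _, _ => 0
  | _, _, .ofGen φ, x, y => I.heat φ x y
  | _, _, .hcomp f g, x, y =>
      f.heat I (x ∘ Fin.castAdd _) (y ∘ Fin.castAdd _) +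
        g.heat I (x ∘ Fin.natAdd _) (y ∘ Fin.natAdd _)
  | _, _, .vcomp f g, x, y => f.heat I x (g.up I y) + g.heat I (f.down I x) y

/-- The generator interpretations are monotone. -/
def Interp.MonotoneInterp [Preorder X] [Preorder Y] [Preorder M] (I : Interp gen X Y M) : Prop :=
  (∀ {m n : ℕ} (φ : gen m n), Monotone (I.down φ)) ∧
  (∀ {m n : ℕ} (φ : gen m n), Monotone (I.up φ)) ∧
  (∀ {m n : ℕ} (φ : gen m n),
    Monotone (fun p : (Fin m → X) × (Fin n → Y) => I.heat φ p.1 p.2))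

/-- The order on parallel circuits built from the interpretations:
`f > g` iff for all courants, `f` transmits larger courants and produces strictly more heat,
heats being compared by the strict order `ltM` on `M`. -/
def CGT [Preorder X] [Preorder Y] [Zero M] [Add M] (I : Interp gen X Y M)
    (ltM : M → M → Prop) {m n : ℕ} (f g : Circuit gen m n) : Prop :=
  ∀ (x : Fin m → X) (y : Fin n → Y),
    g.down I x ≤ f.down I x ∧ g.up I y ≤ f.up I y ∧ ltM (g.heat I x y) (f.heat I x y)

/-- A termination order on a 2-polygraph: a well-founded strict order on parallel
circuits for which the four composition maps are strictly monotone. -/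
structure IsTerminationOrder (gen : ℕ → ℕ → Type)
    (gt : ∀ m n : ℕ, Circuit gen m n → Circuit gen m n → Prop) : Prop where
  irrefl : ∀ {m n : ℕ} (f : Circuit gen m n), ¬ gt m n f f
  trans : ∀ {m n : ℕ} {f g h : Circuit gen m n}, gt m n f g → gt m n g h → gt m n f h
  wf : ∀ m n : ℕ, ¬ ∃ f : ℕ → Circuit gen m n, ∀ i : ℕ, gt m n (f i) (f (i + 1))
  hcomp_left : ∀ {m n p q : ℕ} (h : Circuit gen m n) {f g : Circuit gen p q},
    gt p q f g → gt (m + p) (n + q) (h.hcomp f) (h.hcomp g)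
  hcomp_right : ∀ {m n p q : ℕ} (h : Circuit gen m n) {f g : Circuit gen p q},
    gt p q f g → gt (p + m) (q + n) (f.hcomp h) (g.hcomp h)
  vcomp_left : ∀ {m n p : ℕ} (h : Circuit gen m n) {f g : Circuit gen n p},
    gt n p f g → gt m p (h.vcomp f) (h.vcomp g)
  vcomp_right : ∀ {m n p : ℕ} (h : Circuit gen n p) {f g : Circuit gen m n},
    gt m n f g → gt m p (f.vcomp h) (g.vcomp h)

/-- One-step reduction generated by a set `R` of 3-cells between parallel circuits:
rewriting an occurrence of the source of a 3-cell inside a context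
`h ⋆₁ (k₁ ⋆₀ f₀ ⋆₀ k₂) ⋆₁ k`. -/
def Red (R : ∀ m n : ℕ, Circuit gen m n → Circuit gen m n → Prop)
    {p q : ℕ} (f g : Circuit gen p q) : Prop :=
  ∃ (a b c d m n : ℕ) (k₁ : Circuit gen a b) (k₂ : Circuit gen c d)
    (f₀ g₀ : Circuit gen m n) (h : Circuit gen p (a + m + c))
    (k : Circuit gen (b + n + d) q),
    R m n f₀ g₀ ∧
    f = (h.vcomp ((k₁.hcomp f₀).hcomp k₂)).vcomp k ∧
    g = (h.vcomp ((k₁.hcomp g₀).hcomp k₂)).vcomp k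

lemma append_mono {α : Type} [Preorder α] {m n : ℕ} {a a' : Fin m → α} {b b' : Fin n → α}
    (ha : a ≤ a') (hb : b ≤ b') : Fin.append a b ≤ Fin.append a' b' := by
  intro i
  refine Fin.addCases (fun j => ?_) (fun j => ?_) i <;>
    simp [Fin.append_left, Fin.append_right] <;> first | exact ha j | exact hb j

lemma down_mono [Preorder X] [Preorder Y] [Preorder M] (I : Interp gen X Y M)
    (hI : I.MonotoneInterp) : ∀ {m n : ℕ} (c : Circuit gen m n), Monotone (c.down I) := by
  intro m n c
  induction c with
  | id n => exact fun x y h => h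
  | ofGen φ => exact hI.1 φ
  | hcomp f g ihf ihg =>
      intro x y h
      exact append_mono (ihf fun i => h _) (ihg fun i => h _)
  | vcomp f g ihf ihg => exact fun x y h => ihg (ihf h)

lemma up_mono [Preorder X] [Preorder Y] [Preorder M] (I : Interp gen X Y M)
    (hI : I.MonotoneInterp) : ∀ {m n : ℕ} (c : Circuit gen m n), Monotone (c.up I) := by
  intro m n c
  induction c with
  | id n => exact fun x y h => h
  | ofGen φ => exact hI.2.1 φ
  | hcomp f g ihf ihg =>
      intro x y h
      exact append_mono (ihf fun i => h _) (ihg fun i => h _)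
  | vcomp f g ihf ihg => exact fun x y h => ihf (ihg h)

lemma heat_mono [Preorder X] [Preorder Y] [AddCommMonoid M] [Preorder M]
    (I : Interp gen X Y M) (hI : I.MonotoneInterp)
    (hadd_mono : ∀ a b c : M, a ≤ b → a + c ≤ b + c) :
    ∀ {m n : ℕ} (c : Circuit gen m n) {x x' : Fin m → X} {y y' : Fin n → Y},
      x ≤ x' → y ≤ y' → c.heat I x y ≤ c.heat I x' y' := by
  have hadd2 : ∀ a a' b b' : M, a ≤ a' → b ≤ b' → a + b ≤ a' + b' := by
    intro a a' b b' h1 h2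
    calc a + b ≤ a' + b := hadd_mono _ _ _ h1
      _ = b + a' := add_comm _ _
      _ ≤ b' + a' := hadd_mono _ _ _ h2
      _ = a' + b' := add_comm _ _
  intro m n c
  induction c with
  | id n => intro x x' y y' _ _; exact le_refl _
  | ofGen φ =>
      intro x x' y y' hx hy
      exact hI.2.2 φ (Prod.mk_le_mk.mpr ⟨hx, hy⟩ : ((x, y) : _ × _) ≤ (x', y'))
  | hcomp f g ihf ihg =>
      intro x x' y y' hx hy
      exact hadd2 _ _ _ _ (ihf (fun i => hx _) fun i => hy _)
        (ihg (fun i => hx _) fun i => hy _)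
  | vcomp f g ihf ihg =>
      intro x x' y y' hx hy
      exact hadd2 _ _ _ _ (ihf hx (up_mono I hI g hy))
        (ihg (down_mono I hI f hx) hy)

/-- the relation `>` is compatible with vertical composition:
if `f > g : m → n` then for any `h : p → m` and `k : n → q`,
`h ⋆₁ f ⋆₁ k > h ⋆₁ g ⋆₁ k`. -/
theorem stmt7 {gen : ℕ → ℕ → Type} {X Y M : Type}
    [Preorder X] [Preorder Y] [AddCommMonoid M] [Preorder M]
    (I : Interp gen X Y M) (hI : I.MonotoneInterp)
    (hadd_strict : ∀ a b c : M, a < b → a + c < b + c)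
    (hadd_mono : ∀ a b c : M, a ≤ b → a + c ≤ b + c)
    {m n p q : ℕ} (f g : Circuit gen m n) (h : Circuit gen p m) (k : Circuit gen n q)
    (hfg : CGT I (· < ·) f g) :
    CGT I (· < ·) ((h.vcomp f).vcomp k) ((h.vcomp g).vcomp k) := by
  intro x y
  obtain ⟨hd, hu, _⟩ := hfg (h.down I x) (k.up I y)
  refine ⟨?_, ?_, ?_⟩
  · exact down_mono I hI k hd
  · exact up_mono I hI h hu
  · show (h.heat I x (g.up I (k.up I y)) + g.heat I (h.down I x) (k.up I y)) +
        k.heat I (g.down I (h.down I x)) y <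
      (h.heat I x (f.up I (k.up I y)) + f.heat I (h.down I x) (k.up I y)) +
        k.heat I (f.down I (h.down I x)) y
    have h1 : h.heat I x (g.up I (k.up I y)) ≤ h.heat I x (f.up I (k.up I y)) :=
      heat_mono I hI hadd_mono h (le_refl x) hu
    have h2 : g.heat I (h.down I x) (k.up I y) < f.heat I (h.down I x) (k.up I y) :=
      (hfg (h.down I x) (k.up I y)).2.2
    have h3 : k.heat I (g.down I (h.down I x)) y ≤ k.heat I (f.down I (h.down I x)) y :=
      heat_mono I hI hadd_mono k hd (le_refl y)
    have hlt : h.heat I x (g.up I (k.up I y)) + g.heat I (h.down I x) (k.up I y) <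
        h.heat I x (f.up I (k.up I y)) + f.heat I (h.down I x) (k.up I y) := by
      calc h.heat I x (g.up I (k.up I y)) + g.heat I (h.down I x) (k.up I y)
          ≤ h.heat I x (f.up I (k.up I y)) + g.heat I (h.down I x) (k.up I y) :=
            hadd_mono _ _ _ h1
        _ = g.heat I (h.down I x) (k.up I y) + h.heat I x (f.up I (k.up I y)) := add_comm _ _
        _ < f.heat I (h.down I x) (k.up I y) + h.heat I x (f.up I (k.up I y)) :=
            hadd_strict _ _ _ h2
        _ = h.heat I x (f.up I (k.up I y)) + f.heat I (h.down I x) (k.up I y) := add_comm _ _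
    calc (h.heat I x (g.up I (k.up I y)) + g.heat I (h.down I x) (k.up I y)) +
          k.heat I (g.down I (h.down I x)) y
        < (h.heat I x (f.up I (k.up I y)) + f.heat I (h.down I x) (k.up I y)) +
          k.heat I (g.down I (h.down I x)) y := hadd_strict _ _ _ hlt
      _ = k.heat I (g.down I (h.down I x)) y +
          (h.heat I x (f.up I (k.up I y)) + f.heat I (h.down I x) (k.up I y)) := add_comm _ _
      _ ≤ k.heat I (f.down I (h.down I x)) y +
          (h.heat I x (f.up I (k.up I y)) + f.heat I (h.down I x) (k.up I y)) :=
            hadd_mono _ _ _ h3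
      _ = (h.heat I x (f.up I (k.up I y)) + f.heat I (h.down I x) (k.up I y)) +
          k.heat I (f.down I (h.down I x)) y := add_comm _ _
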